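/- Let P ≥ 2 be an even integer, let v, p_1, p_2 be integers, and let ϖ be a real number such that (ϖ − v(p_1 − p_2))/P is not an integer. Then the correlation of two shifted Chu-type exponential sequences satisfies Σ_{p=0}^{P−1} e^{iπv(p − p_1)²/P} · e^{−iπv(p − p_2)²/P} · e^{2πiϖp/P} = e^{iπv(p_1² − p_2²)/P} · (1 − e^{2πiϖ}) / (1 − e^{2πi(ϖ − v(p_1 − p_2))/P}). -/
import Mathlib


/-- Frequency-offset-modulated cross-correlation of two shifts of a length-`P` Chu
sequence: for even `P` and `(ϖ − v(p₁ − p₂))/P` not an integer,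
`Σ_{p=0}^{P−1} e^{iπv(p−p₁)²/P} e^{−iπv(p−p₂)²/P} e^{2πiϖp/P}
  = e^{iπv(p₁²−p₂²)/P} (1 − e^{2πiϖ})/(1 − e^{2πi(ϖ−v(p₁−p₂))/P})`. -/
theorem stmt19 (P : ℕ) (hP : 2 ≤ P) (hPeven : Even P) (v p₁ p₂ : ℤ) (ϖ : ℝ)
    (hϖ : ∀ z : ℤ, (ϖ - (v : ℝ) * ((p₁ : ℝ) - (p₂ : ℝ))) / (P : ℝ) ≠ (z : ℝ)) :
    ∑ p ∈ Finset.range P,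
        Complex.exp ((Real.pi * (v : ℝ) * ((p : ℝ) - (p₁ : ℝ)) ^ 2 / (P : ℝ) : ℝ) * Complex.I) *
          Complex.exp ((-(Real.pi * (v : ℝ) * ((p : ℝ) - (p₂ : ℝ)) ^ 2 / (P : ℝ)) : ℝ) * Complex.I) *
          Complex.exp ((2 * Real.pi * ϖ * (p : ℝ) / (P : ℝ) : ℝ) * Complex.I) =
      Complex.exp ((Real.pi * (v : ℝ) * ((p₁ : ℝ) ^ 2 - (p₂ : ℝ) ^ 2) / (P : ℝ) : ℝ) * Complex.I) *
        (1 - Complex.exp ((2 * Real.pi * ϖ : ℝ) * Complex.I)) /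
        (1 - Complex.exp ((2 * Real.pi * (ϖ - (v : ℝ) * ((p₁ : ℝ) - (p₂ : ℝ))) / (P : ℝ) : ℝ) * Complex.I)) := by
  have hPne : (P : ℝ) ≠ 0 := by positivity
  set θ : ℝ := 2 * Real.pi * (ϖ - (v : ℝ) * ((p₁ : ℝ) - (p₂ : ℝ))) / (P : ℝ) with hθ
  set r : ℂ := Complex.exp ((θ : ℝ) * Complex.I) with hr
  set c : ℂ := Complex.exp ((Real.pi * (v : ℝ) * ((p₁ : ℝ) ^ 2 - (p₂ : ℝ) ^ 2) / (P : ℝ) : ℝ) * Complex.I) with hc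
  have hterm : ∀ p ∈ Finset.range P,
      Complex.exp ((Real.pi * (v : ℝ) * ((p : ℝ) - (p₁ : ℝ)) ^ 2 / (P : ℝ) : ℝ) * Complex.I) *
        Complex.exp ((-(Real.pi * (v : ℝ) * ((p : ℝ) - (p₂ : ℝ)) ^ 2 / (P : ℝ)) : ℝ) * Complex.I) *
        Complex.exp ((2 * Real.pi * ϖ * (p : ℝ) / (P : ℝ) : ℝ) * Complex.I) = c * r ^ p := by
    intro p _
    rw [hc, hr, ← Complex.exp_nat_mul, ← Complex.exp_add, ← Complex.exp_add, ← Complex.exp_add]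
    congr 1
    push_cast
    rw [hθ]
    push_cast
    ring
  rw [Finset.sum_congr rfl hterm, ← Finset.mul_sum]
  have hr1 : r ≠ 1 := by
    intro h
    rw [hr, Complex.exp_eq_one_iff] at h
    obtain ⟨n, hn⟩ := h
    apply hϖ n
    have h2 : (θ : ℂ) * Complex.I = ((n : ℂ) * (2 * Real.pi)) * Complex.I := by
      rw [hn]; ring
    have h3 : (θ : ℂ) = (n : ℂ) * (2 * Real.pi) := mul_right_cancel₀ Complex.I_ne_zero h2
    have hθr : θ = (n : ℝ) * (2 * Real.pi) := by exact_mod_cast h3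
    rw [hθ] at hθr
    have hπ : Real.pi ≠ 0 := Real.pi_ne_zero
    have h2π : (2 * Real.pi) ≠ 0 := by positivity
    field_simp at hθr
    have h4 : (2 * Real.pi) * (ϖ - (v : ℝ) * ((p₁ : ℝ) - (p₂ : ℝ))) = (2 * Real.pi) * ((n : ℝ) * P) := by
      rw [hθr]; ring
    have h5 := mul_left_cancel₀ h2π h4
    field_simp
    linarith [h5]
  rw [geom_sum_eq hr1]
  have hPC : (P : ℂ) ≠ 0 := by exact_mod_cast hPne
  have hrP : r ^ P = Complex.exp ((2 * Real.pi * ϖ : ℝ) * Complex.I) := by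
    rw [hr, ← Complex.exp_nat_mul]
    have : (P : ℂ) * ((θ : ℝ) * Complex.I) =
        ((2 * Real.pi * ϖ : ℝ) * Complex.I) + ((-(v * (p₁ - p₂)) : ℤ) : ℂ) * (2 * Real.pi * Complex.I) := by
      rw [hθ]
      push_cast
      field_simp
      ring
    rw [this, Complex.exp_add, Complex.exp_int_mul_two_pi_mul_I, mul_one]
  rw [hrP]
  have hq : (Complex.exp ((2 * Real.pi * ϖ : ℝ) * Complex.I) - 1) / (r - 1)
      = (1 - Complex.exp ((2 * Real.pi * ϖ : ℝ) * Complex.I)) / (1 - r) := by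
    rw [← neg_sub (1 : ℂ) (Complex.exp _), ← neg_sub (1 : ℂ) r, neg_div_neg_eq]
  rw [hq, mul_div_assoc]
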